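/- For consistent ws-descriptors d1 and d2, define Diff({d1},{d2}) as the set of descriptors d1 ∪ {x1↦w1,…,x_{i−1}↦w_{i−1}, x_i↦w'_i} where d2 − d1 = {x1↦w1,…,x_k↦w_k} (enumerated in some fixed order), 1 ≤ i ≤ k, and w'_i ∈ Dom_{x_i} with w'_i ≠ w_i; if d1 and d2 are inconsistent, Diff({d1},{d2}) := {d1}. Then ω(Diff({d1},{d2})) = ω(d1) \ ω(d2). -/

import Mathlib

def WSExtends {V α : Type} (Dom : V → Finset α) (f : V → α) (d : V → Option α) : Prop :=
  (∀ x, f x ∈ Dom x) ∧ ∀ x a, d x = some a → f x = a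

def omegaD {V α : Type} (Dom : V → Finset α) (d : V → Option α) : Set (V → α) :=
  {f | WSExtends Dom f d}

/-- Diff({d1},{d2}) for consistent `d1`, `d2`, relative to a fixed enumeration
`xs` of the variables assigned by `d2` but not by `d1`: the descriptors extending
`d1` by the `d2`-assignments on `x1,…,x_{i-1}` and a differing value on `x_i`. -/
def DiffSet {V α : Type} [DecidableEq V] [DecidableEq α]
    (Dom : V → Finset α) (d1 d2 : V → Option α) (xs : List V) : Set (V → Option α) :=
  { e | ∃ i : Fin xs.length, ∃ w' ∈ Dom (xs.get i),
      d2 (xs.get i) ≠ some w' ∧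
      e = fun y => if y = xs.get i then some w'
            else if y ∈ xs.take i.val then d2 y else d1 y }

theorem stmt6 {V α : Type} [DecidableEq V] [DecidableEq α]
    (Dom : V → Finset α)
    (d1 d2 : V → Option α)
    (hv1 : ∀ x a, d1 x = some a → a ∈ Dom x)
    (hv2 : ∀ x a, d2 x = some a → a ∈ Dom x)
    (hcons : ∀ x a b, d1 x = some a → d2 x = some b → a = b)
    (xs : List V) (hnd : xs.Nodup)
    (hxs : ∀ y, y ∈ xs ↔ (d1 y = none ∧ d2 y ≠ none)) :
    (⋃ e ∈ DiffSet Dom d1 d2 xs, omegaD Dom e) = omegaD Dom d1 \ omegaD Dom d2 := by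
  classical
  ext f
  simp only [Set.mem_iUnion, Set.mem_diff, omegaD, Set.mem_setOf_eq, DiffSet]
  constructor
  · rintro ⟨e, ⟨i, w', hw', hne, rfl⟩, hdom, hext⟩
    have hximem : xs.get i ∈ xs := by simpa using List.get_mem xs i.val i.isLt
    refine ⟨⟨hdom, ?_⟩, ?_⟩
    · intro y a hy
      have hynot : y ∉ xs := fun hmem => by
        rw [(hxs y).1 hmem |>.1] at hy; cases hy
      have h1 : y ≠ xs.get i := fun h => hynot (h ▸ hximem)
      have h2 : y ∉ xs.take i.val := fun h => hynot (List.take_subset _ _ h)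
      refine hext y a ?_
      simp only [if_neg h1, if_neg h2]
      exact hy
    · rintro ⟨_, h2⟩
      obtain ⟨a, ha⟩ := Option.ne_none_iff_exists'.1 ((hxs _).1 hximem).2
      have hfa := h2 _ a ha
      have hfw : f (xs.get i) = w' := hext _ w' (by simp)
      rw [hfw] at hfa
      exact hne (by rw [ha, hfa])
  · rintro ⟨⟨hdom, h1⟩, hn2⟩
    -- there is a variable where f disagrees with d2
    have hbad : ∃ x b, d2 x = some b ∧ f x ≠ b := by
      by_contra h
      push_neg at h
      exact hn2 ⟨hdom, fun x a hx => h x a hx⟩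
    obtain ⟨x, b, hxb, hfb⟩ := hbad
    have hxmem : x ∈ xs := by
      rw [hxs]
      refine ⟨?_, by simp [hxb]⟩
      cases h1x : d1 x with
      | none => rfl
      | some c =>
        exact absurd (hcons x c b h1x hxb ▸ h1 x c h1x) hfb
    obtain ⟨j, hj⟩ := List.mem_iff_get.1 hxmem
    set P : ℕ → Prop := fun n => ∃ h : n < xs.length, d2 (xs.get ⟨n, h⟩) ≠ some (f (xs.get ⟨n, h⟩))
    have hPj : P j.val := ⟨j.isLt, by
      simp only [Fin.eta]
      rw [hj, hxb]
      intro h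
      exact hfb (Option.some_inj.1 h).symm⟩
    have hEx : ∃ n, P n := ⟨j.val, hPj⟩
    let n := Nat.find hEx
    obtain ⟨hnlt, hnne⟩ := Nat.find_spec hEx
    refine ⟨_, ⟨⟨n, hnlt⟩, f (xs.get ⟨n, hnlt⟩), hdom _, hnne, rfl⟩, hdom, ?_⟩
    intro y a hy
    by_cases hyi : y = xs.get ⟨n, hnlt⟩
    · simp only [hyi, if_pos rfl] at hy
      exact hyi ▸ (Option.some_inj.1 hy)
    · simp only [if_neg hyi] at hy
      by_cases hyt : y ∈ xs.take n
      · simp only [if_pos hyt] at hy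
        obtain ⟨m, hm, hmy⟩ := List.mem_take_iff_getElem.1 hyt
        have hmlt : m < xs.length := lt_of_lt_of_le hm (min_le_right _ _)
        have hmn : m < n := lt_of_lt_of_le hm (min_le_left _ _)
        have := Nat.find_min hEx hmn
        simp only [P, not_exists, not_not] at this
        have hd2 : d2 (xs.get ⟨m, hmlt⟩) = some (f (xs.get ⟨m, hmlt⟩)) := this hmlt
        have hy' : y = xs.get ⟨m, hmlt⟩ := by simpa using hmy.symm
        rw [hy', hd2] at hy
        rw [hy']
        exact (Option.some_inj.1 hy)
      · simp only [if_neg hyt] at hy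
        exact h1 y a hy
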